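/- arXiv:1105.3250 — 9 statements merged into one kernel-verified Lean document; each statement's English description precedes it below -/
import Mathlib

section
/- Let Λ be a λ-synchronizing subshift. For every μ ∈ S_l(Λ) there exists μ' ∈ S_{l+1}(Λ) with μ ∼_l μ', i.e. Γ_l^-(μ) = Γ_l^-(μ'). -/
open scoped Classical

/-- The language of a subshift over alphabet `A`: nonempty, factorial
(closed under subwords) and extendable on both sides. -/
structure ShiftLang (A : Type*) where
  L : Set (List A)
  nil_mem : [] ∈ L
  factor : ∀ u v w : List A, u ++ v ++ w ∈ L → v ∈ L
  ext_left : ∀ w ∈ L, ∃ a : A, (a :: w) ∈ L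
  ext_right : ∀ w ∈ L, ∃ a : A, (w ++ [a]) ∈ L

namespace ShiftLang

variable {A : Type*} (Λ : ShiftLang A)

/-- Admissible words of length `l`. -/
def B (l : ℕ) : Set (List A) := {w | w ∈ Λ.L ∧ w.length = l}

/-- `Γ_l^-(μ)`: admissible words `ν` of length `l` with `νμ` admissible. -/
def Γminus (l : ℕ) (μ : List A) : Set (List A) := {ν | ν ∈ Λ.B l ∧ ν ++ μ ∈ Λ.L}

/-- `Γ_*^+(μ)`: followers of `μ`. -/
def Γplus (μ : List A) : Set (List A) := {ω | μ ++ ω ∈ Λ.L}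

/-- `S_l(Λ)`: the set of `l`-synchronizing words. -/
def Sync (l : ℕ) : Set (List A) :=
  {μ | μ ∈ Λ.L ∧ ∀ ω ∈ Λ.Γplus μ, Λ.Γminus l μ = Λ.Γminus l (μ ++ ω)}

/-- Irreducibility of a subshift in terms of its language. -/
def Irreducible : Prop := ∀ μ ∈ Λ.L, ∀ ν ∈ Λ.L, ∃ η, μ ++ η ++ ν ∈ Λ.L

/-- `λ`-synchronization of a subshift. -/
def IsLambdaSync : Prop :=
  ∀ l : ℕ, ∀ η ∈ Λ.B l, ∀ k : ℕ, l ≤ k → ∃ ν ∈ Λ.Sync k, η ++ ν ∈ Λ.Sync (k - l)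

/-- `μ ≻ ν` : there is `η` with `Γ_*^+(ν) = Γ_*^+(μην)`. -/
def Succ (μ ν : List A) : Prop := ∃ η, Λ.Γplus ν = Λ.Γplus (μ ++ η ++ ν)

/-- Synchronizing transitivity. -/
def SyncTransitive : Prop := ∀ μ ∈ Λ.L, ∀ ν ∈ Λ.L, Λ.Succ μ ν ∧ Λ.Succ ν μ

/-- The right one-sided shift space `X_Λ`. -/
def X : Set (ℕ → A) := {x | ∀ n : ℕ, (List.ofFn fun i : Fin n => x i) ∈ Λ.L}

end ShiftLang

/-- in a `λ`-synchronizing subshift, every `μ ∈ S_l(Λ)` is `l`-past equivalent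
to some `μ' ∈ S_{l+1}(Λ)`. -/
theorem exists_sync_succ_pastEquiv {A : Type*} (Λ : ShiftLang A)
    (hirr : Λ.Irreducible) (hls : Λ.IsLambdaSync) (l : ℕ) (μ : List A)
    (hμ : μ ∈ Λ.Sync l) :
    ∃ μ' ∈ Λ.Sync (l + 1), Λ.Γminus l μ = Λ.Γminus l μ' := by
  obtain ⟨ν, hν, hμν⟩ := hls μ.length μ ⟨hμ.1, rfl⟩ (μ.length + (l + 1)) (by omega)
  have h : μ.length + (l + 1) - μ.length = l + 1 := by omega
  rw [h] at hμν
  exact ⟨μ ++ ν, hμν, hμ.2 ν hμν.1⟩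
end

section
/- Let Λ be a λ-synchronizing subshift. For every μ ∈ S_l(Λ) there exist a symbol β ∈ Σ and ν ∈ S_{l+1}(Λ) such that Γ_l^-(μ) = Γ_l^-(βν). -/
open scoped Classical

/-- If `ν` is `(|τ| + j)`-synchronizing and `τν` is admissible, then `τν` is
`j`-synchronizing. -/
lemma sync_drop {A : Type*} (Λ : ShiftLang A) {j : ℕ} {ν τ : List A}
    (hν : ν ∈ Λ.Sync (τ.length + j)) (hτν : τ ++ ν ∈ Λ.L) :
    τ ++ ν ∈ Λ.Sync j := by
  refine ⟨hτν, ?_⟩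
  intro ω hω
  have hνω : ω ∈ Λ.Γplus ν := by
    have : τ ++ (ν ++ ω) ++ [] ∈ Λ.L := by
      simpa using (show (τ ++ ν) ++ ω ∈ Λ.L from hω)
    exact Λ.factor _ _ _ this
  have key := hν.2 ω hνω
  ext α
  constructor
  · rintro ⟨⟨hαL, hαlen⟩, hα⟩
    have hατ : α ++ τ ∈ Λ.Γminus (τ.length + j) ν := by
      refine ⟨⟨?_, by simp [hαlen, Nat.add_comm]⟩, by simpa [List.append_assoc] using hα⟩
      have : [] ++ (α ++ τ) ++ ν ∈ Λ.L := by simpa [List.append_assoc] using hα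
      exact Λ.factor _ _ _ this
    rw [key] at hατ
    refine ⟨⟨hαL, hαlen⟩, ?_⟩
    have := hατ.2
    simpa [List.append_assoc] using this
  · rintro ⟨⟨hαL, hαlen⟩, hα⟩
    have hατ : α ++ τ ∈ Λ.Γminus (τ.length + j) (ν ++ ω) := by
      refine ⟨⟨?_, by simp [hαlen, Nat.add_comm]⟩, by simpa [List.append_assoc] using hα⟩
      have : [] ++ (α ++ τ) ++ (ν ++ ω) ∈ Λ.L := by simpa [List.append_assoc] using hα
      exact Λ.factor _ _ _ this
    rw [← key] at hατ
    refine ⟨⟨hαL, hαlen⟩, ?_⟩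
    have := hατ.2
    simpa [List.append_assoc] using this

/-- in a `λ`-synchronizing subshift, for every `μ ∈ S_l(Λ)` there exist a symbol
`β` and `ν ∈ S_{l+1}(Λ)` with `Γ_l^-(μ) = Γ_l^-(βν)`. -/
theorem exists_symbol_sync_succ {A : Type*} (Λ : ShiftLang A)
    (hirr : Λ.Irreducible) (hls : Λ.IsLambdaSync) (l : ℕ) (μ : List A)
    (hμ : μ ∈ Λ.Sync l) :
    ∃ (β : A) (ν : List A), ν ∈ Λ.Sync (l + 1) ∧ Λ.Γminus l μ = Λ.Γminus l (β :: ν) := by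
  match μ, hμ with
  | [], hμ =>
    obtain ⟨ν, hν, -⟩ := hls 0 [] ⟨Λ.nil_mem, rfl⟩ (l + 1) (Nat.zero_le _)
    obtain ⟨β, hβ⟩ := Λ.ext_left ν hν.1
    refine ⟨β, ν, hν, ?_⟩
    have := hμ.2 (β :: ν) (show ([] : List A) ++ (β :: ν) ∈ Λ.L by simpa using hβ)
    simpa using this
  | β :: μ', hμ =>
    obtain ⟨ν₁, hν₁, hsync⟩ := hls (μ'.length + 1) (β :: μ') ⟨hμ.1, by simp⟩
      (μ'.length + 1 + l) (Nat.le_add_right _ _)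
    have hμν₁ : (β :: μ') ++ ν₁ ∈ Λ.L := hsync.1
    have hμ'ν₁ : μ' ++ ν₁ ∈ Λ.L := by
      have : [β] ++ (μ' ++ ν₁) ++ [] ∈ Λ.L := by simpa using hμν₁
      exact Λ.factor _ _ _ this
    have hν₁' : ν₁ ∈ Λ.Sync (μ'.length + (l + 1)) := by
      have : μ'.length + 1 + l = μ'.length + (l + 1) := by omega
      rwa [this] at hν₁
    have hkey : μ' ++ ν₁ ∈ Λ.Sync (l + 1) := sync_drop Λ hν₁' hμ'ν₁
    refine ⟨β, μ' ++ ν₁, hkey, ?_⟩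
    have := hμ.2 ν₁ hμν₁
    simpa using this
end

section
/- Every synchronizing irreducible subshift is λ-synchronizing: if Λ is irreducible and possesses a word m such that Γ_∞^-(m ω) = Γ_∞^-(m) for all followers ω of m (a synchronizing word in the classical sense), then Λ is λ-synchronizing. -/
open scoped Classical

/-- every synchronizing irreducible subshift is `λ`-synchronizing: if `Λ` is
irreducible and possesses a classically synchronizing word `m` (any predecessor of `m` can be
concatenated with any follower of `m`), then `Λ` is `λ`-synchronizing. -/
theorem isLambdaSync_of_synchronizing {A : Type*} (Λ : ShiftLang A)
    (hirr : Λ.Irreducible)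
    (hsync : ∃ m ∈ Λ.L, ∀ ν ω : List A, ν ++ m ∈ Λ.L → m ++ ω ∈ Λ.L →
      ν ++ m ++ ω ∈ Λ.L) :
    Λ.IsLambdaSync := by
  obtain ⟨m, hm, hmsync⟩ := hsync
  -- Key claim: any admissible word ending in `m` is `l`-synchronizing for every `l`.
  have key : ∀ (w : List A) (l : ℕ), w ++ m ∈ Λ.L → (w ++ m) ∈ Λ.Sync l := by
    intro w l hwm
    refine ⟨hwm, ?_⟩
    intro ω hω
    ext ν
    constructor
    · rintro ⟨hνB, hνL⟩
      refine ⟨hνB, ?_⟩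
      have h1 : (ν ++ w) ++ m ∈ Λ.L := by
        simpa [List.append_assoc] using hνL
      have h2 : m ++ ω ∈ Λ.L := by
        have hω' : (w ++ m) ++ ω ∈ Λ.L := hω
        have : w ++ (m ++ ω) ++ [] ∈ Λ.L := by
          simpa [List.append_assoc] using hω'
        exact Λ.factor _ _ _ this
      have := hmsync (ν ++ w) ω h1 h2
      simpa [List.append_assoc] using this
    · rintro ⟨hνB, hνL⟩
      refine ⟨hνB, ?_⟩
      have : [] ++ (ν ++ (w ++ m)) ++ ω ∈ Λ.L := by
        simpa [List.append_assoc] using hνL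
      exact Λ.factor _ _ _ this
  intro l η hη k hk
  obtain ⟨η', hη'⟩ := hirr η hη.1 m hm
  refine ⟨η' ++ m, ?_, ?_⟩
  · have hL : (η' ++ m) ∈ Λ.L := by
      have : η ++ (η' ++ m) ++ [] ∈ Λ.L := by
        simpa [List.append_assoc] using hη'
      exact Λ.factor _ _ _ this
    exact key η' k hL
  · have := key (η ++ η') (k - l) (by simpa [List.append_assoc] using hη')
    simpa [List.append_assoc] using this
end

section
/- If a λ-graph system 𝔏 presenting a subshift Λ is ι-irreducible, then Λ is an irreducible subshift. -/
open scoped Classical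

/-- A (left-resolving–free) `λ`-graph system: a labeled Bratteli diagram with `ι`-maps. -/
structure LGS (A : Type*) where
  V : ℕ → Type
  edge : ∀ l : ℕ, V l → A → V (l + 1) → Prop
  ι : ∀ l : ℕ, V (l + 1) → V l
  ι_surj : ∀ l, Function.Surjective (ι l)
  exists_succ : ∀ l (v : V l), ∃ a u, edge l v a u
  exists_pred : ∀ l (u : V (l + 1)), ∃ a v, edge l v a u
  local_prop : ∀ l (u : V l) (v : V (l + 2)) (a : A),
    (∃ w, edge (l + 1) w a v ∧ ι l w = u) ↔ edge l u a (ι (l + 1) v)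

namespace LGS

variable {A : Type*} (G : LGS A)

/-- Labeled paths in a `λ`-graph system. -/
inductive Path : ∀ {l m : ℕ}, G.V l → List A → G.V m → Prop
  | nil {l : ℕ} (v : G.V l) : Path v [] v
  | cons {l m : ℕ} {v : G.V l} {a : A} {u : G.V (l + 1)} {w : List A} {x : G.V m} :
      G.edge l v a u → Path u w x → Path v (a :: w) x

/-- The word `w` leaves the vertex `v`. -/
def Leaves {l : ℕ} (v : G.V l) (w : List A) : Prop := ∃ m, ∃ u : G.V m, G.Path v w u

/-- The vertex `v` launches the word `w`: `w` leaves `v` and no other vertex of `V_l`. -/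
def Launches {l : ℕ} (v : G.V l) (w : List A) : Prop :=
  G.Leaves v w ∧ ∀ v' : G.V l, G.Leaves v' w → v' = v

/-- Left-resolving: edges with the same label have distinct terminal vertices. -/
def LeftResolving : Prop :=
  ∀ (l : ℕ) (v v' : G.V l) (a : A) (u : G.V (l + 1)), G.edge l v a u → G.edge l v' a u → v = v'

/-- The predecessor set `Γ_l^-(v)` of a vertex: words of length `l` labeling paths from `V_0` to `v`. -/
def ΓminusV {l : ℕ} (v : G.V l) : Set (List A) :=
  {w | w.length = l ∧ ∃ v0 : G.V 0, G.Path v0 w v}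

/-- Predecessor-separated: distinct vertices of `V_l` have distinct predecessor sets. -/
def PredecessorSeparated : Prop := ∀ (l : ℕ) (u v : G.V l), G.ΓminusV u = G.ΓminusV v → u = v

/-- A `λ`-synchronizing `λ`-graph system: every vertex launches some word. -/
def LambdaSynchronizing : Prop := ∀ (l : ℕ) (v : G.V l), ∃ w : List A, G.Launches v w

/-- `G` presents the subshift `Λ`: the language of `Λ` is the set of words labeling paths of `G`. -/
def Presents (Λ : ShiftLang A) : Prop :=
  ∀ w : List A, w ∈ Λ.L ↔ ∃ (l : ℕ) (v : G.V l), G.Leaves v w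

/-- Iterated `ι`-map `ι^n : V_{l+n} → V_l`. -/
def iotaPow : ∀ (n : ℕ) {l : ℕ}, G.V (l + n) → G.V l
  | 0, _, v => v
  | n + 1, l, v => iotaPow n (G.ι (l + n) v)

/-- `ι`-irreducibility of a `λ`-graph system. -/
def IotaIrreducible : Prop :=
  ∀ (l : ℕ) (v u : G.V l) (γ : List A) (t : G.V (l + γ.length)), G.Path u γ t →
    ∃ (n : ℕ) (u' : G.V (l + n)) (w : List A) (t' : G.V (l + n + γ.length)),
      G.iotaPow n u' = u ∧ G.Path v w u' ∧ G.Path u' γ t' ∧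
      G.iotaPow n (cast (congrArg G.V (Nat.add_right_comm l n γ.length)) t') = t

/-- `λ`-irreducibility of a `λ`-graph system. -/
def LambdaIrreducible : Prop :=
  ∀ (l : ℕ) (u v : G.V l), ∃ L : ℕ, ∀ w : G.V (l + L),
    G.iotaPow L w = u → ∃ γ : List A, G.Path v γ w

/-- `Γ_∞^+(v)`: infinite label sequences of infinite paths starting at `v`. -/
def GammaInf {l : ℕ} (v : G.V l) : Set (ℕ → A) :=
  {x | ∃ vs : ∀ n : ℕ, G.V (l + n), vs 0 = v ∧ ∀ n, G.edge (l + n) (vs n) (x n) (vs (n + 1))}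

/-- Condition (I): every vertex has at least two distinct infinite follower label sequences. -/
def ConditionI : Prop := ∀ (l : ℕ) (v : G.V l), ∃ x ∈ G.GammaInf v, ∃ y ∈ G.GammaInf v, x ≠ y

/-- `G` is (isomorphic to) the `λ`-synchronizing `λ`-graph system `𝔏^{λ(Λ)}` of `Λ`:
vertices of `V_l` correspond to `l`-past equivalence classes of `l`-synchronizing words
(identified via their predecessor sets), and edges are as in the canonical construction. -/
def IsLambdaSyncSystem (Λ : ShiftLang A) : Prop :=
  (∀ (l : ℕ) (v : G.V l), ∃ μ ∈ Λ.Sync l, G.ΓminusV v = Λ.Γminus l μ) ∧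
  (∀ l : ℕ, ∀ μ ∈ Λ.Sync l, ∃ v : G.V l, G.ΓminusV v = Λ.Γminus l μ) ∧
  (∀ (l : ℕ) (v : G.V l) (a : A) (u : G.V (l + 1)),
    G.edge l v a u ↔ ∃ ν ∈ Λ.Sync (l + 1), (a :: ν) ∈ Λ.L ∧
      G.ΓminusV u = Λ.Γminus (l + 1) ν ∧ G.ΓminusV v = Λ.Γminus l (a :: ν))

end LGS

/-- The partial isometry `S_w = S_{w_1} ⋯ S_{w_k}` associated with a word. -/
def sword {A R : Type*} [Monoid R] (S : A → R) (w : List A) : R := (w.map S).prod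

namespace LGS

variable {A : Type*} (G : LGS A)

lemma path_append {l m k : ℕ} {v : G.V l} {x : G.V m} {y : G.V k} {w1 w2 : List A}
    (h1 : G.Path v w1 x) (h2 : G.Path x w2 y) : G.Path v (w1 ++ w2) y := by
  induction h1 with
  | nil => exact h2
  | cons e _ ih => exact Path.cons e (ih h2)

lemma path_length {l m : ℕ} {v : G.V l} {w : List A} {x : G.V m}
    (h : G.Path v w x) : m = l + w.length := by
  induction h with
  | nil => simp
  | cons _ _ ih => simp [ih]; omega

lemma path_down (γ : List A) : ∀ {l m : ℕ} (u : G.V (l + 1)) (t : G.V m),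
    G.Path u γ t → G.Leaves (G.ι l u) γ := by
  induction γ with
  | nil => intro l m u t _; exact ⟨l, _, Path.nil _⟩
  | cons a γ ih =>
    intro l m u t h
    cases h with
    | cons e p =>
      rename_i x
      have e' : G.edge l (G.ι l u) a (G.ι (l + 1) x) :=
        (G.local_prop l (G.ι l u) x a).mp ⟨u, e, rfl⟩
      obtain ⟨m', t', p'⟩ := ih x t p
      exact ⟨m', t', Path.cons e' p'⟩

lemma path_up (γ : List A) : ∀ {l m : ℕ} (u : G.V l) (t : G.V m),
    G.Path u γ t → ∃ u' : G.V (l + 1), G.ι l u' = u ∧ G.Leaves u' γ := by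
  induction γ with
  | nil =>
    intro l m u t _
    obtain ⟨u', hu'⟩ := G.ι_surj l u
    exact ⟨u', hu', l + 1, _, Path.nil _⟩
  | cons a γ ih =>
    intro l m u t h
    cases h with
    | cons e p =>
      rename_i x
      obtain ⟨x', hx', m', t', p'⟩ := ih x t p
      obtain ⟨w, hw1, hw2⟩ := (G.local_prop l u x' a).mpr (by rwa [hx'])
      exact ⟨w, hw2, m', t', Path.cons hw1 p'⟩

lemma leaves_at_level (γ : List A) :
    (∃ (m : ℕ) (u : G.V m), G.Leaves u γ) → ∀ k : ℕ, ∃ u' : G.V k, G.Leaves u' γ := by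
  rintro ⟨m, u, h⟩ k
  have down : ∃ u0 : G.V 0, G.Leaves u0 γ := by
    clear k
    induction m with
    | zero => exact ⟨u, h⟩
    | succ m ih =>
      obtain ⟨m', t, p⟩ := h
      exact ih (G.ι m u) (G.path_down γ u t p)
  obtain ⟨u0, h0⟩ := down
  clear h
  induction k with
  | zero => exact ⟨u0, h0⟩
  | succ k ih =>
    obtain ⟨uk, mk, tk, pk⟩ := ih
    obtain ⟨u', _, h'⟩ := G.path_up γ uk tk pk
    exact ⟨u', h'⟩

end LGS

/-- if a `λ`-graph system presenting a subshift `Λ` is `ι`-irreducible, then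
`Λ` is irreducible. -/
theorem irreducible_of_iotaIrreducible {A : Type*} (G : LGS A) (Λ : ShiftLang A)
    (hpres : G.Presents Λ) (hii : G.IotaIrreducible) :
    Λ.Irreducible := by
  intro μ hμ ν hν
  obtain ⟨l, v, mμ, x, pμ⟩ := (hpres μ).mp hμ
  have hmμ : mμ = l + μ.length := G.path_length pμ
  subst hmμ
  obtain ⟨lν, vν, hlv⟩ := (hpres ν).mp hν
  obtain ⟨u, mν, t, pν⟩ := G.leaves_at_level ν ⟨lν, vν, hlv⟩ (l + μ.length)
  have hmν : mν = l + μ.length + ν.length := G.path_length pν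
  subst hmν
  obtain ⟨n, u', w, t', _, pw, pν', _⟩ := hii (l + μ.length) x u ν t pν
  have : G.Path v (μ ++ (w ++ ν)) t' :=
    G.path_append pμ (G.path_append pw pν')
  have hmem : μ ++ w ++ ν ∈ Λ.L := by
    rw [List.append_assoc]
    exact (hpres _).mpr ⟨_, _, _, _, this⟩
  exact ⟨w, hmem⟩
end

section
/- Let 𝔏 be a λ-synchronizing, left-resolving, predecessor-separated λ-graph system presenting Λ. For any l-synchronizing word ω ∈ S_l(Λ) there exists a vertex v ∈ V_l that launches ω, and Γ_l^-(ω) = Γ_l^-(v), i.e. the l-predecessor set of the word ω equals the predecessor set of its launching vertex. -/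
open scoped Classical

namespace LGS

variable {A : Type*} (G : LGS A)

theorem path_trans {l m n : ℕ} {v : G.V l} {y : G.V m} {u : G.V n} {w1 w2 : List A}
    (p : G.Path v w1 y) : G.Path y w2 u → G.Path v (w1 ++ w2) u := by
  induction p with
  | nil => exact fun q => q
  | cons e _ ih => exact fun q => .cons e (ih q)

theorem path_level {l m : ℕ} {v : G.V l} {u : G.V m} {w : List A}
    (p : G.Path v w u) : m = l + w.length := by
  induction p with
  | nil => simp
  | cons e _ ih => simp only [List.length_cons]; omega

theorem path_split {w1 : List A} : ∀ {w2 : List A} {l m : ℕ} {v : G.V l} {u : G.V m},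
    G.Path v (w1 ++ w2) u → ∃ k, ∃ y : G.V k, G.Path v w1 y ∧ G.Path y w2 u := by
  induction w1 with
  | nil => exact fun p => ⟨_, _, .nil _, p⟩
  | cons a w1 ih =>
    intro w2 l m v u p
    cases p with
    | cons e p' =>
      obtain ⟨k, y, h1, h2⟩ := ih p'
      exact ⟨k, y, .cons e h1, h2⟩

theorem path_unique (hlr : G.LeftResolving) : ∀ (w : List A) {l m : ℕ}
    (x x' : G.V l) (u : G.V m), G.Path x w u → G.Path x' w u → x = x' := by
  intro w
  induction w with
  | nil =>
    intro l m x x' u p q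
    cases p; cases q; rfl
  | cons a w ih =>
    intro l m x x' u p q
    cases p with
    | cons e p' =>
      cases q with
      | cons f q' =>
        have h := ih _ _ _ p' q'
        subst h
        exact hlr l x x' a _ e f

theorem leaves_proj {l : ℕ} {v : G.V (l + 1)} {w : List A} (h : G.Leaves v w) :
    G.Leaves (G.ι l v) w := by
  induction w generalizing l v with
  | nil => exact ⟨_, _, .nil _⟩
  | cons a w ih =>
    obtain ⟨m, u, p⟩ := h
    cases p with
    | @cons _ _ _ _ u₁ _ _ e p' =>
      have he : G.edge l (G.ι l v) a (G.ι (l + 1) u₁) :=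
        (G.local_prop l (G.ι l v) u₁ a).mp ⟨v, e, rfl⟩
      obtain ⟨m', u', p''⟩ := ih ⟨m, u, p'⟩
      exact ⟨m', u', .cons he p''⟩

theorem leaves_lift {l : ℕ} {v : G.V l} {w : List A} (h : G.Leaves v w) :
    ∃ v' : G.V (l + 1), G.ι l v' = v ∧ G.Leaves v' w := by
  induction w generalizing l v with
  | nil =>
    obtain ⟨v', hv'⟩ := G.ι_surj l v
    exact ⟨v', hv', _, _, .nil _⟩
  | cons a w ih =>
    obtain ⟨m, u, p⟩ := h
    cases p with
    | @cons _ _ _ _ u₁ _ _ e p' =>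
      obtain ⟨u', hu', hl⟩ := ih ⟨m, u, p'⟩
      have he : G.edge l v a (G.ι (l + 1) u') := hu' ▸ e
      obtain ⟨v', hv'e, hv'i⟩ := (G.local_prop l v u' a).mpr he
      obtain ⟨m', e', pp⟩ := hl
      exact ⟨v', hv'i, m', e', .cons hv'e pp⟩

theorem leaves_zero {w : List A} : ∀ {n : ℕ} (v : G.V n), G.Leaves v w →
    ∃ v0 : G.V 0, G.Leaves v0 w := by
  intro n
  induction n with
  | zero => exact fun v h => ⟨v, h⟩
  | succ n ih => exact fun v h => ih (G.ι n v) (G.leaves_proj h)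

theorem leaves_at {w : List A} (h : ∃ n, ∃ v : G.V n, G.Leaves v w) (l : ℕ) :
    ∃ v : G.V l, G.Leaves v w := by
  obtain ⟨n, v, hv⟩ := h
  have h0 := G.leaves_zero v hv
  induction l with
  | zero => exact h0
  | succ l ih =>
    obtain ⟨v', hv'⟩ := ih
    obtain ⟨v'', _, h''⟩ := G.leaves_lift hv'
    exact ⟨v'', h''⟩

theorem path_cast_end {l m m' : ℕ} (h : m = m') {v : G.V l} {u : G.V m} {w : List A}
    (p : G.Path v w u) : G.Path v w (cast (congrArg G.V h) u) := by subst h; exact p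

theorem path_cast_start {l l' m : ℕ} (h : l = l') {v : G.V l} {u : G.V m} {w : List A}
    (p : G.Path v w u) : G.Path (cast (congrArg G.V h) v) w u := by subst h; exact p

end LGS

/-- for a `λ`-synchronizing, left-resolving, predecessor-separated `λ`-graph
system `G` presenting `Λ` and any `l`-synchronizing word `ω`, there is a vertex `v ∈ V_l`
launching `ω` with `Γ_l^-(ω) = Γ_l^-(v)`. -/
theorem exists_launching_vertex {A : Type*} (G : LGS A) (Λ : ShiftLang A)
    (hpres : G.Presents Λ) (hlr : G.LeftResolving) (hps : G.PredecessorSeparated)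
    (hls : G.LambdaSynchronizing) (l : ℕ) (ω : List A) (hω : ω ∈ Λ.Sync l) :
    ∃ v : G.V l, G.Launches v ω ∧ Λ.Γminus l ω = G.ΓminusV v := by
  have hωL : ω ∈ Λ.L := hω.1
  have key : ∀ x : G.V l, G.Leaves x ω → Λ.Γminus l ω = G.ΓminusV x := by
    intro x hx
    obtain ⟨m, u, p⟩ := hx
    have hm : m = l + ω.length := G.path_level p
    subst hm
    obtain ⟨η, hη⟩ := hls (l + ω.length) u
    obtain ⟨mη, eη, pη⟩ := hη.1
    have hωη : ω ++ η ∈ Λ.L := (hpres _).mpr ⟨l, x, mη, eη, G.path_trans p pη⟩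
    have hsync := hω.2 η hωη
    ext ν
    constructor
    · intro hν
      rw [hsync] at hν
      obtain ⟨⟨hνL, hlen⟩, hcat⟩ := hν
      obtain ⟨v0, hv0⟩ := G.leaves_at ((hpres _).mp hcat) 0
      obtain ⟨m0, e0, pfull⟩ := hv0
      obtain ⟨k1, y, p1, p2⟩ := G.path_split pfull
      obtain ⟨k2, z, q1, q2⟩ := G.path_split p2
      have hk1 : k1 = l := by have := G.path_level p1; omega
      have p1' : G.Path v0 ν (cast (congrArg G.V hk1) y) := G.path_cast_end hk1 p1
      have q1' : G.Path (cast (congrArg G.V hk1) y) ω z := G.path_cast_start hk1 q1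
      have hk2 : k2 = l + ω.length := G.path_level q1'
      have q1'' : G.Path (cast (congrArg G.V hk1) y) ω (cast (congrArg G.V hk2) z) :=
        G.path_cast_end hk2 q1'
      have q2' : G.Path (cast (congrArg G.V hk2) z) η e0 := G.path_cast_start hk2 q2
      have hz : cast (congrArg G.V hk2) z = u := hη.2 _ ⟨m0, e0, q2'⟩
      rw [hz] at q1''
      have hyx : cast (congrArg G.V hk1) y = x := G.path_unique hlr ω _ x u q1'' p
      exact ⟨hlen, v0, hyx ▸ p1'⟩
    · rintro ⟨hlen, v0, pν⟩
      have hνω : ν ++ ω ∈ Λ.L := (hpres _).mpr ⟨0, v0, _, _, G.path_trans pν p⟩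
      exact ⟨⟨Λ.factor [] ν ω hνω, hlen⟩, hνω⟩
  obtain ⟨x, hx⟩ := G.leaves_at ((hpres ω).mp hωL) l
  refine ⟨x, ⟨hx, fun x' hx' => hps l x' x ?_⟩, key x hx⟩
  rw [← key x hx, ← key x' hx']
end

section
/- In the C*-algebra O_{λ(Λ)} of the λ-synchronizing λ-graph system of a λ-synchronizing subshift Λ, for words ξ, η ∈ B_*(Λ): Γ_*^+(ξ) = Γ_*^+(η) if and only if S_ξ* S_ξ = S_η* S_η. -/
open scoped Classical

set_option linter.unusedSectionVars false

section LangAux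
namespace ShiftLang
variable {A : Type*} (Λ : ShiftLang A)

lemma memL_of_append_left {u v : List A} (h : u ++ v ∈ Λ.L) : u ∈ Λ.L :=
  Λ.factor [] u v h

lemma memL_of_append_right {u v : List A} (h : u ++ v ∈ Λ.L) : v ∈ Λ.L :=
  Λ.factor u v [] (by simpa using h)

lemma exists_left_ext (j : ℕ) {w : List A} (hw : w ∈ Λ.L) :
    ∃ τ : List A, τ.length = j ∧ τ ++ w ∈ Λ.L := by
  induction j with
  | zero => exact ⟨[], rfl, hw⟩
  | succ n ih =>
    obtain ⟨τ, hlen, hmem⟩ := ih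
    obtain ⟨a, ha⟩ := Λ.ext_left _ hmem
    exact ⟨a :: τ, by simp [hlen], by simpa using ha⟩

lemma mem_gammaMinus_append {ρ σ : List A} {l j : ℕ} (hj : l + ρ.length = j) (τ : List A) :
    τ ∈ Λ.Γminus l (ρ ++ σ) ↔ τ.length = l ∧ τ ++ ρ ∈ Λ.Γminus j σ := by
  constructor
  · rintro ⟨⟨hτL, hτlen⟩, hmem⟩
    have hmem' : (τ ++ ρ) ++ σ ∈ Λ.L := by simpa [List.append_assoc] using hmem
    exact ⟨hτlen, ⟨⟨Λ.memL_of_append_left hmem', by simp [hτlen, hj]⟩, hmem'⟩⟩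
  · rintro ⟨hlen, ⟨⟨hL, _⟩, hmem⟩⟩
    exact ⟨⟨Λ.memL_of_append_left hL, hlen⟩, by simpa [List.append_assoc] using hmem⟩

lemma gammaMinus_cons_eq {ν σ : List A} {j : ℕ}
    (h : Λ.Γminus (j+1) ν = Λ.Γminus (j+1) σ) (a : A) :
    Λ.Γminus j (a :: ν) = Λ.Γminus j (a :: σ) := by
  ext τ
  rw [show a :: ν = [a] ++ ν from rfl, show a :: σ = [a] ++ σ from rfl,
    Λ.mem_gammaMinus_append (j := j+1) (by simp),
    Λ.mem_gammaMinus_append (j := j+1) (by simp), h]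

lemma cons_memL_of_gammaMinus_eq {ν σ : List A} {j : ℕ}
    (h : Λ.Γminus (j+1) ν = Λ.Γminus (j+1) σ) {a : A} (ha : a :: ν ∈ Λ.L) :
    a :: σ ∈ Λ.L := by
  obtain ⟨τ, hlen, hmem⟩ := Λ.exists_left_ext j ha
  have h1 : τ ++ [a] ∈ Λ.Γminus (j+1) ν := by
    have h2 : (τ ++ [a]) ++ ν ∈ Λ.L := by simpa using hmem
    exact ⟨⟨Λ.memL_of_append_left h2, by simp [hlen]⟩, h2⟩
  rw [h] at h1
  exact Λ.memL_of_append_right (u := τ) (v := a :: σ) (by simpa using h1.2)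

lemma append_sync {μ : List A} {j : ℕ} (hμ : μ ∈ Λ.Sync j) (ρ : List A) {l : ℕ}
    (hl : l + ρ.length = j) (hρμ : ρ ++ μ ∈ Λ.L) : ρ ++ μ ∈ Λ.Sync l := by
  refine ⟨hρμ, fun ω hω => ?_⟩
  have hω' : (ρ ++ μ) ++ ω ∈ Λ.L := hω
  have hμω : μ ++ ω ∈ Λ.L :=
    Λ.memL_of_append_right (show ρ ++ (μ ++ ω) ∈ Λ.L by simpa [List.append_assoc] using hω')
  have hsync := hμ.2 ω hμω
  ext τ
  rw [Λ.mem_gammaMinus_append hl, List.append_assoc, Λ.mem_gammaMinus_append hl, ← hsync]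

end ShiftLang
end LangAux

section ProjAux
variable {R : Type*} [Ring R] [StarRing R] [PartialOrder R] [StarOrderedRing R]
variable {ι : Type*} [Fintype ι] {E : ι → R}

lemma proj_aux_nonneg (hproj : ∀ i, E i * E i = E i ∧ star (E i) = E i) (i : ι) :
    0 ≤ E i := by
  have h := star_mul_self_nonneg (E i)
  rwa [(hproj i).2, (hproj i).1] at h

lemma proj_aux_pqp (hproj : ∀ i, E i * E i = E i ∧ star (E i) = E i)
    (hsum : ∑ i, E i = 1) {i j : ι} (hij : j ≠ i) : E i * E j * E i = 0 := by
  have hnn : 0 ≤ E i * E j * E i := by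
    have h := star_left_conjugate_nonneg (proj_aux_nonneg hproj j) (E i)
    rwa [(hproj i).2] at h
  have hle : E j ≤ 1 - E i := by
    rw [← hsum, ← Finset.add_sum_erase _ _ (Finset.mem_univ i), add_sub_cancel_left]
    exact Finset.single_le_sum (fun k _ => proj_aux_nonneg hproj k)
      (Finset.mem_erase.mpr ⟨hij, Finset.mem_univ j⟩)
  have hup : E i * E j * E i ≤ 0 := by
    have h := star_left_conjugate_le_conjugate hle (E i)
    rw [(hproj i).2] at h
    calc E i * E j * E i ≤ E i * (1 - E i) * E i := h
    _ = (E i - E i * E i) * E i := by rw [mul_sub, mul_one]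
    _ = 0 := by rw [(hproj i).1, sub_self, zero_mul]
  exact le_antisymm hup hnn

lemma proj_aux_extract (hproj : ∀ i, E i * E i = E i ∧ star (E i) = E i)
    (hsum : ∑ i, E i = 1) (g : ι → R) (hg : ∀ j, ∃ n : ℕ, g j = n • E j) (i : ι) :
    E i * (∑ j, g j) * E i = g i := by
  rw [Finset.mul_sum, Finset.sum_mul, Finset.sum_eq_single i]
  · obtain ⟨n, hn⟩ := hg i
    rw [hn, mul_smul_comm, smul_mul_assoc, (hproj i).1, (hproj i).1]
  · intro j _ hji
    obtain ⟨n, hn⟩ := hg j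
    rw [hn]
    calc E i * (n • E j) * E i = n • (E i * E j * E i) := by
          rw [mul_smul_comm, smul_mul_assoc]
    _ = 0 := by rw [proj_aux_pqp hproj hsum hji, smul_zero]
  · intro h; exact absurd (Finset.mem_univ i) h

end ProjAux

section GraphAux
variable {A : Type*} [Fintype A] {R : Type*} [Ring R] [StarRing R] [PartialOrder R]
  [StarOrderedRing R]
variable (G : LGS A) [∀ l, Fintype (G.V l)]
  (S : A → R) (E : ∀ l : ℕ, G.V l → R)

/-- Left-resolving is automatic from the relations. -/
lemma lgs_left_resolving
    (h1 : ∑ a : A, S a * star (S a) = 1)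
    (h2 : ∀ l : ℕ, ∑ v : G.V l, E l v = 1)
    (h5 : ∀ (a : A) (l : ℕ) (v : G.V l),
      star (S a) * E l v * S a = ∑ u : G.V (l + 1), if G.edge l v a u then E (l + 1) u else 0)
    (hEproj : ∀ (l : ℕ) (v : G.V l), E l v * E l v = E l v ∧ star (E l v) = E l v)
    (hEne : ∀ (l : ℕ) (v : G.V l), E l v ≠ 0) :
    ∀ (l : ℕ) (v v' : G.V l) (a : A) (u : G.V (l + 1)),
      G.edge l v a u → G.edge l v' a u → v = v' := by
  intro l v v' a u hv hv'
  by_contra hne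
  set N : G.V (l+1) → ℕ := fun x => (Finset.univ.filter fun w => G.edge l w a x).card with hN
  set P : R := star (S a) * S a with hPdef
  have hproj := fun x => hEproj (l+1) x
  have hsum := h2 (l+1)
  have hP : P = ∑ x : G.V (l+1), N x • E (l+1) x := by
    have e1 : P = star (S a) * (∑ w : G.V l, E l w) * S a := by
      rw [h2 l, mul_one]
    rw [e1, Finset.mul_sum, Finset.sum_mul]
    calc ∑ w : G.V l, star (S a) * E l w * S a
        = ∑ w : G.V l, ∑ x : G.V (l+1), if G.edge l w a x then E (l+1) x else 0 :=
          Finset.sum_congr rfl fun w _ => h5 a l w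
    _ = ∑ x : G.V (l+1), ∑ w : G.V l, if G.edge l w a x then E (l+1) x else 0 :=
          Finset.sum_comm
    _ = ∑ x : G.V (l+1), N x • E (l+1) x := by
          refine Finset.sum_congr rfl fun x _ => ?_
          rw [← Finset.sum_filter, Finset.sum_const]
  -- N u ≥ 2
  have hNu : 1 < N u :=
    Finset.one_lt_card.mpr ⟨v, by simp [hN, hv], v', by simp [hN, hv'], hne⟩
  -- P * P ≤ P
  have hsa : S a * star (S a) ≤ 1 := by
    rw [← h1]
    exact Finset.single_le_sum (fun b _ => mul_star_self_nonneg (S b)) (Finset.mem_univ a)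
  have hPP : P * P ≤ P := by
    have hconj := star_left_conjugate_le_conjugate hsa (S a)
    calc P * P = star (S a) * (S a * star (S a)) * S a := by
          rw [hPdef]; simp only [mul_assoc]
    _ ≤ star (S a) * 1 * S a := hconj
    _ = P := by rw [mul_one]
  -- E u * P * E u = N u • E u
  have hEPE : E (l+1) u * P * E (l+1) u = N u • E (l+1) u := by
    rw [hP]
    exact proj_aux_extract hproj hsum _ (fun j => ⟨N j, rfl⟩) u
  -- decomposition of P
  set Rst : R := ∑ x ∈ Finset.univ.erase u, N x • E (l+1) x with hRdef
  have hPdec : P = N u • E (l+1) u + Rst := by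
    rw [hP, ← Finset.add_sum_erase _ _ (Finset.mem_univ u)]
  have hERE : E (l+1) u * Rst * E (l+1) u = 0 := by
    rw [hRdef, Finset.mul_sum, Finset.sum_mul]
    refine Finset.sum_eq_zero fun x hx => ?_
    rw [mul_smul_comm, smul_mul_assoc,
      proj_aux_pqp hproj hsum (Finset.ne_of_mem_erase hx), smul_zero]
  have hstarR : star Rst = Rst := by
    rw [hRdef, star_sum]
    exact Finset.sum_congr rfl fun x _ => by rw [star_nsmul, (hproj x).2]
  -- lower bound for E u * (P*P) * E u
  have hsplit : E (l+1) u * (P * P) * E (l+1) u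
      = (N u * N u) • E (l+1) u + star (Rst * E (l+1) u) * (Rst * E (l+1) u) := by
    have hstar2 : star (Rst * E (l+1) u) = E (l+1) u * Rst := by
      rw [star_mul, hstarR, (hproj u).2]
    have e1 : E (l+1) u * (P * P) * E (l+1) u
        = (E (l+1) u * P) * (P * E (l+1) u) := by simp only [mul_assoc]
    have e2 : E (l+1) u * P = N u • E (l+1) u + E (l+1) u * Rst := by
      rw [hPdec, mul_add, mul_smul_comm, (hproj u).1]
    have e3 : P * E (l+1) u = N u • E (l+1) u + Rst * E (l+1) u := by
      rw [hPdec, add_mul, smul_mul_assoc, (hproj u).1]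
    rw [e1, e2, e3, hstar2, add_mul, mul_add, mul_add]
    have t1 : (N u • E (l+1) u) * (N u • E (l+1) u) = (N u * N u) • E (l+1) u := by
      rw [smul_mul_assoc, mul_smul_comm, (hproj u).1, smul_smul]
    have t2 : (N u • E (l+1) u) * (Rst * E (l+1) u) = 0 := by
      rw [smul_mul_assoc, ← mul_assoc, hERE, smul_zero]
    have t3 : (E (l+1) u * Rst) * (N u • E (l+1) u) = 0 := by
      rw [mul_smul_comm, hERE, smul_zero]
    rw [t1, t2, t3, add_zero, zero_add]
  have hnn4 : 0 ≤ star (Rst * E (l+1) u) * (Rst * E (l+1) u) :=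
    star_mul_self_nonneg _
  have hlow : (N u * N u) • E (l+1) u ≤ E (l+1) u * (P * P) * E (l+1) u := by
    rw [hsplit]; exact le_add_of_nonneg_right hnn4
  have hupconj : E (l+1) u * (P * P) * E (l+1) u ≤ E (l+1) u * P * E (l+1) u := by
    have h := star_left_conjugate_le_conjugate hPP (E (l+1) u)
    rwa [(hproj u).2] at h
  have hkey : (N u * N u) • E (l+1) u ≤ N u • E (l+1) u := by
    calc (N u * N u) • E (l+1) u ≤ E (l+1) u * (P * P) * E (l+1) u := hlow
    _ ≤ E (l+1) u * P * E (l+1) u := hupconj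
    _ = N u • E (l+1) u := hEPE
  -- contradiction
  have hEnn : 0 ≤ E (l+1) u := proj_aux_nonneg hproj u
  have hmono : ∀ {p q : ℕ}, p ≤ q → p • E (l+1) u ≤ q • E (l+1) u := by
    intro p q hpq
    have : q • E (l+1) u = p • E (l+1) u + (q - p) • E (l+1) u := by
      rw [← add_nsmul, Nat.add_sub_cancel' hpq]
    rw [this]
    exact le_add_of_nonneg_right (nsmul_nonneg hEnn _)
  have h2N : (N u + N u) • E (l+1) u ≤ N u • E (l+1) u :=
    le_trans (hmono (by nlinarith)) hkey
  have hle0 : N u • E (l+1) u ≤ 0 := by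
    have := h2N
    rw [add_nsmul] at this
    calc N u • E (l+1) u
        = N u • E (l+1) u + N u • E (l+1) u - N u • E (l+1) u := by
          rw [add_sub_cancel_right]
    _ ≤ N u • E (l+1) u - N u • E (l+1) u := by
          exact sub_le_sub_right this _
    _ = 0 := sub_self _
  have hle1 : E (l+1) u ≤ N u • E (l+1) u := by
    have h := hmono (show 1 ≤ N u by omega)
    rwa [one_nsmul] at h
  exact hEne (l+1) u (le_antisymm (le_trans hle1 hle0) hEnn)

/-- Paths into a fixed vertex with the same label word have a unique starting vertex. -/
lemma lgs_path_unique
    (hLR : ∀ (l : ℕ) (v v' : G.V l) (a : A) (u : G.V (l + 1)),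
      G.edge l v a u → G.edge l v' a u → v = v') :
    ∀ (w : List A) (l m : ℕ) (y y' : G.V l) (u : G.V m),
      G.Path y w u → G.Path y' w u → y = y' := by
  intro w
  induction w with
  | nil =>
    intro l m y y' u hp hp'
    cases hp
    cases hp'
    rfl
  | cons a w ih =>
    intro l m y y' u hp hp'
    obtain ⟨z, e, p⟩ : ∃ z : G.V (l+1), G.edge l y a z ∧ G.Path z w u := by
      cases hp with | cons e p => exact ⟨_, e, p⟩
    obtain ⟨z', e', p'⟩ : ∃ z : G.V (l+1), G.edge l y' a z ∧ G.Path z w u := by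
      cases hp' with | cons e p => exact ⟨_, e, p⟩
    have hz := ih (l+1) m z z' u p p'
    subst hz
    exact hLR l y y' a z e e'

lemma lgs_path_sum
    (h5 : ∀ (a : A) (l : ℕ) (v : G.V l),
      star (S a) * E l v * S a = ∑ u : G.V (l + 1), if G.edge l v a u then E (l + 1) u else 0)
    (hLR : ∀ (l : ℕ) (v v' : G.V l) (a : A) (u : G.V (l + 1)),
      G.edge l v a u → G.edge l v' a u → v = v') :
    ∀ (w : List A) (l : ℕ) (x : G.V l) (m : ℕ), m = l + w.length →
      star (sword S w) * E l x * sword S w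
        = ∑ u : G.V m, if G.Path x w u then E m u else 0 := by
  intro w
  induction w with
  | nil =>
    intro l x m hm
    have hml : l = m := by simpa using hm.symm
    subst hml
    show star (sword S []) * E l x * sword S [] = ∑ u : G.V l, if G.Path x [] u then E l u else 0
    have hiff : ∀ u : G.V l, G.Path x [] u ↔ u = x := by
      intro u
      constructor
      · intro h; cases h; rfl
      · rintro rfl; exact LGS.Path.nil _
    simp only [hiff]
    simp [sword, Finset.sum_ite_eq']
  | cons a w ih =>
    intro l x m hm
    have hm' : m = (l + 1) + w.length := by simp at hm; omega
    have expand : star (sword S (a :: w)) * E l x * sword S (a :: w)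
        = star (sword S w) * (star (S a) * E l x * S a) * sword S w := by
      simp only [sword, List.map_cons, List.prod_cons, star_mul, mul_assoc]
    rw [expand, h5 a l x]
    have step1 : star (sword S w) * (∑ y : G.V (l+1), if G.edge l x a y then E (l+1) y else 0)
          * sword S w
        = ∑ y : G.V (l+1), if G.edge l x a y
            then star (sword S w) * E (l+1) y * sword S w else 0 := by
      rw [Finset.mul_sum, Finset.sum_mul]
      exact Finset.sum_congr rfl fun y _ => by
        simp [mul_ite, ite_mul, mul_zero, zero_mul]
    rw [step1]
    have step2 : ∀ y : G.V (l+1), (if G.edge l x a y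
          then star (sword S w) * E (l+1) y * sword S w else 0)
        = ∑ u : G.V m, if G.edge l x a y ∧ G.Path y w u then E m u else 0 := by
      intro y
      by_cases he : G.edge l x a y
      · rw [if_pos he, ih (l+1) y m hm']
        exact Finset.sum_congr rfl fun u _ => by simp [he]
      · rw [if_neg he, eq_comm]
        exact Finset.sum_eq_zero fun u _ => by simp [he]
    rw [Finset.sum_congr rfl fun y _ => step2 y, Finset.sum_comm]
    refine Finset.sum_congr rfl fun u _ => ?_
    by_cases hp : G.Path x (a :: w) u
    · obtain ⟨y₀, e₀, p₀⟩ : ∃ y : G.V (l+1), G.edge l x a y ∧ G.Path y w u := by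
        cases hp with
        | cons e p => exact ⟨_, e, p⟩
      rw [if_pos hp, Finset.sum_eq_single y₀]
      · rw [if_pos ⟨e₀, p₀⟩]
      · intro y _ hy
        by_cases hpy : G.Path y w u
        · exact absurd (lgs_path_unique G hLR w _ _ y y₀ u hpy p₀) hy
        · simp [hpy]
      · intro h; exact absurd (Finset.mem_univ y₀) h
    · rw [if_neg hp]
      refine Finset.sum_eq_zero fun y _ => ?_
      by_cases he : G.edge l x a y
      · by_cases hpy : G.Path y w u
        · exact absurd (LGS.Path.cons he hpy) hp
        · simp [hpy]
      · simp [he]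

lemma lgs_sword_sum
    (h2 : ∀ l : ℕ, ∑ v : G.V l, E l v = 1)
    (h5 : ∀ (a : A) (l : ℕ) (v : G.V l),
      star (S a) * E l v * S a = ∑ u : G.V (l + 1), if G.edge l v a u then E (l + 1) u else 0)
    (hLR : ∀ (l : ℕ) (v v' : G.V l) (a : A) (u : G.V (l + 1)),
      G.edge l v a u → G.edge l v' a u → v = v')
    (w : List A) (l m : ℕ) (hm : m = l + w.length) :
    star (sword S w) * sword S w
      = ∑ u : G.V m, if ∃ v : G.V l, G.Path v w u then E m u else 0 := by
  have e1 : star (sword S w) * sword S w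
      = ∑ v : G.V l, star (sword S w) * E l v * sword S w := by
    rw [← Finset.sum_mul, ← Finset.mul_sum, h2 l, mul_one]
  rw [e1, Finset.sum_congr rfl fun v _ => lgs_path_sum G S E h5 hLR w l v m hm,
    Finset.sum_comm]
  refine Finset.sum_congr rfl fun u _ => ?_
  by_cases hex : ∃ v : G.V l, G.Path v w u
  · obtain ⟨v₀, p₀⟩ := hex
    rw [if_pos ⟨v₀, p₀⟩, Finset.sum_eq_single v₀]
    · rw [if_pos p₀]
    · intro v _ hv
      by_cases hpv : G.Path v w u
      · exact absurd (lgs_path_unique G hLR w _ _ v v₀ u hpv p₀) hv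
      · simp [hpv]
    · intro h; exact absurd (Finset.mem_univ v₀) h
  · rw [if_neg hex]
    refine Finset.sum_eq_zero fun v _ => ?_
    rw [if_neg fun hpv => hex ⟨v, hpv⟩]

end GraphAux


section SysAux
variable {A : Type*} (G : LGS A) (Λ : ShiftLang A)

lemma lgs_reach_of_mem (hsys : G.IsLambdaSyncSystem Λ) :
    ∀ (w : List A) (m : ℕ) (μ : List A), μ ∈ Λ.Sync m → ∀ (u : G.V m),
      G.ΓminusV u = Λ.Γminus m μ → ∀ (l : ℕ), l + w.length = m → w ++ μ ∈ Λ.L →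
      ∃ v : G.V l, G.Path v w u ∧ G.ΓminusV v = Λ.Γminus l (w ++ μ) := by
  intro w
  induction w with
  | nil =>
    intro m μ hμ u hu l hl hwμ
    have hml : l = m := by simpa using hl
    subst hml
    exact ⟨u, LGS.Path.nil u, by simpa using hu⟩
  | cons a w ih =>
    intro m μ hμ u hu l hl hwμ
    have hl' : (l+1) + w.length = m := by simp at hl; omega
    have hwμ' : w ++ μ ∈ Λ.L := Λ.memL_of_append_right (u := [a]) (by simpa using hwμ)
    obtain ⟨y, py, hy⟩ := ih m μ hμ u hu (l+1) hl' hwμ'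
    have hsw : w ++ μ ∈ Λ.Sync (l+1) := Λ.append_sync hμ w (by omega) hwμ'
    have haL : a :: (w ++ μ) ∈ Λ.L := by simpa using hwμ
    have hsaw : a :: (w ++ μ) ∈ Λ.Sync l := by
      have h := Λ.append_sync hsw [a] (l := l) (by simp) (by simpa using haL)
      simpa using h
    obtain ⟨v, hv⟩ := hsys.2.1 l _ hsaw
    have he : G.edge l v a y := (hsys.2.2 l v a y).mpr ⟨w ++ μ, hsw, haL, hy, hv⟩
    exact ⟨v, LGS.Path.cons he py, hv⟩

lemma lgs_mem_of_reach (hsys : G.IsLambdaSyncSystem Λ) :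
    ∀ {l m : ℕ} {v : G.V l} {w : List A} {u : G.V m}, G.Path v w u →
      ∀ μ : List A, μ ∈ Λ.L → G.ΓminusV u = Λ.Γminus m μ →
      w ++ μ ∈ Λ.L ∧ G.ΓminusV v = Λ.Γminus l (w ++ μ) := by
  intro l m v w u hp
  induction hp with
  | nil v =>
    intro μ hμ hu
    exact ⟨hμ, by simpa using hu⟩
  | cons e p ih =>
    intro μ hμ hu
    obtain ⟨hwμ, hy⟩ := ih μ hμ hu
    obtain ⟨ν, hνs, haν, hyν, hvν⟩ := (hsys.2.2 _ _ _ _).mp e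
    have hνeq := hyν.symm.trans hy
    refine ⟨?_, ?_⟩
    · exact Λ.cons_memL_of_gammaMinus_eq hνeq haν
    · rw [hvν]
      exact Λ.gammaMinus_cons_eq hνeq _

end SysAux


/-- in the `C*`-algebra `O_{λ(Λ)}` of the `λ`-synchronizing `λ`-graph system of
a `λ`-synchronizing subshift `Λ`, for words `ξ, η ∈ B_*(Λ)` one has
`Γ_*^+(ξ) = Γ_*^+(η)` iff `S_ξ* S_ξ = S_η* S_η`. -/
theorem followerSet_eq_iff_sourceProjection_eq
    {A : Type*} [Fintype A] {R : Type*} [Ring R] [StarRing R] [PartialOrder R]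
    [StarOrderedRing R]
    (G : LGS A) [∀ l, Fintype (G.V l)] (Λ : ShiftLang A)
    (hirr : Λ.Irreducible) (hlsΛ : Λ.IsLambdaSync) (hsys : G.IsLambdaSyncSystem Λ)
    (S : A → R) (E : ∀ l : ℕ, G.V l → R)
    (h1 : ∑ a : A, S a * star (S a) = 1)
    (h2 : ∀ l : ℕ, ∑ v : G.V l, E l v = 1)
    (h3 : ∀ (l : ℕ) (v : G.V l),
      E l v = ∑ u : G.V (l + 1), if G.ι l u = v then E (l + 1) u else 0)
    (h4 : ∀ (a : A) (l : ℕ) (v : G.V l),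
      S a * star (S a) * E l v = E l v * (S a * star (S a)))
    (h5 : ∀ (a : A) (l : ℕ) (v : G.V l),
      star (S a) * E l v * S a = ∑ u : G.V (l + 1), if G.edge l v a u then E (l + 1) u else 0)
    (hEproj : ∀ (l : ℕ) (v : G.V l), E l v * E l v = E l v ∧ star (E l v) = E l v)
    (hEne : ∀ (l : ℕ) (v : G.V l), E l v ≠ 0)
    (ξ η : List A) (hξ : ξ ∈ Λ.L) (hη : η ∈ Λ.L) :
    Λ.Γplus ξ = Λ.Γplus η ↔
      star (sword S ξ) * sword S ξ = star (sword S η) * sword S η := by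
  have hLR := lgs_left_resolving G S E h1 h2 h5 hEproj hEne
  have Fξ := lgs_sword_sum G S E h2 h5 hLR ξ η.length (ξ.length + η.length) (by omega)
  have Fη := lgs_sword_sum G S E h2 h5 hLR η ξ.length (ξ.length + η.length) (by omega)
  constructor
  · intro hEq
    rw [Fξ, Fη]
    refine Finset.sum_congr rfl fun u _ => ?_
    obtain ⟨μ, hμs, hμu⟩ := hsys.1 _ u
    have hiff : (∃ v : G.V η.length, G.Path v ξ u) ↔ (∃ v : G.V ξ.length, G.Path v η u) := by
      constructor
      · rintro ⟨v, pv⟩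
        have h := (lgs_mem_of_reach G Λ hsys pv μ hμs.1 hμu).1
        have hμγ : μ ∈ Λ.Γplus ξ := h
        rw [hEq] at hμγ
        obtain ⟨v', pv', -⟩ :=
          lgs_reach_of_mem G Λ hsys η _ μ hμs u hμu ξ.length (by omega) hμγ
        exact ⟨v', pv'⟩
      · rintro ⟨v, pv⟩
        have h := (lgs_mem_of_reach G Λ hsys pv μ hμs.1 hμu).1
        have hμγ : μ ∈ Λ.Γplus η := h
        rw [← hEq] at hμγ
        obtain ⟨v', pv', -⟩ :=
          lgs_reach_of_mem G Λ hsys ξ _ μ hμs u hμu η.length (by omega) hμγ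
        exact ⟨v', pv'⟩
    exact if_congr hiff rfl rfl
  · intro halg
    have main : ∀ (ζ θ : List A), ζ ∈ Λ.L → θ ∈ Λ.L →
        star (sword S ζ) * sword S ζ = star (sword S θ) * sword S θ →
        ∀ ω, ζ ++ ω ∈ Λ.L → θ ++ ω ∈ Λ.L := by
      intro ζ θ hζ hθ heq ω hζω
      obtain ⟨ν, hνK, hsync2⟩ := hlsΛ (ζ ++ ω).length (ζ ++ ω) ⟨hζω, rfl⟩
        ((ζ ++ ω).length + θ.length) (by omega)
      have hζων : (ζ ++ ω) ++ ν ∈ Λ.L := hsync2.1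
      have hων : ω ++ ν ∈ Λ.L :=
        Λ.memL_of_append_right (u := ζ) (by simpa [List.append_assoc] using hζων)
      have hsν : ω ++ ν ∈ Λ.Sync (ζ.length + θ.length) :=
        Λ.append_sync hνK ω (by simp; omega) hων
      obtain ⟨u, hu⟩ := hsys.2.1 _ _ hsν
      have hζμL : ζ ++ (ω ++ ν) ∈ Λ.L := by simpa [List.append_assoc] using hζων
      obtain ⟨v, pv, -⟩ :=
        lgs_reach_of_mem G Λ hsys ζ _ _ hsν u hu θ.length (by omega) hζμL
      have F1 := lgs_sword_sum G S E h2 h5 hLR ζ θ.length (ζ.length + θ.length) (by omega)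
      have F2 := lgs_sword_sum G S E h2 h5 hLR θ ζ.length (ζ.length + θ.length) (by omega)
      have hsums : (∑ x : G.V (ζ.length + θ.length),
            if ∃ v : G.V θ.length, G.Path v ζ x then E (ζ.length + θ.length) x else 0)
          = ∑ x : G.V (ζ.length + θ.length),
            if ∃ v : G.V ζ.length, G.Path v θ x then E (ζ.length + θ.length) x else 0 := by
        rw [← F1, ← F2, heq]
      have hproj := fun x => hEproj (ζ.length + θ.length) x
      have e1 := proj_aux_extract hproj (h2 (ζ.length + θ.length))
          (fun x => if ∃ v : G.V θ.length, G.Path v ζ x then E (ζ.length + θ.length) x else 0)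
          (fun j => by
            by_cases hc : ∃ v : G.V θ.length, G.Path v ζ j
            · exact ⟨1, by simp only [if_pos hc, one_smul]⟩
            · exact ⟨0, by simp only [if_neg hc, zero_smul]⟩) u
      have e2 := proj_aux_extract hproj (h2 (ζ.length + θ.length))
          (fun x => if ∃ v : G.V ζ.length, G.Path v θ x then E (ζ.length + θ.length) x else 0)
          (fun j => by
            by_cases hc : ∃ v : G.V ζ.length, G.Path v θ j
            · exact ⟨1, by simp only [if_pos hc, one_smul]⟩
            · exact ⟨0, by simp only [if_neg hc, zero_smul]⟩) u
      have hATu : (if ∃ v : G.V θ.length, G.Path v ζ u then E (ζ.length + θ.length) u else 0)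
          = (if ∃ v : G.V ζ.length, G.Path v θ u then E (ζ.length + θ.length) u else 0) := by
        rw [← e1, ← e2, hsums]
      rw [if_pos ⟨v, pv⟩] at hATu
      by_cases hc2 : ∃ v' : G.V ζ.length, G.Path v' θ u
      · obtain ⟨v', pv'⟩ := hc2
        have h := (lgs_mem_of_reach G Λ hsys pv' (ω ++ ν) hsν.1 hu).1
        exact Λ.memL_of_append_left (u := θ ++ ω) (v := ν)
          (by simpa [List.append_assoc] using h)
      · rw [if_neg hc2] at hATu
        exact absurd hATu (hEne _ u)
    exact Set.ext fun ω =>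
      ⟨fun h => main ξ η hξ hη halg ω h, fun h => main η ξ hη hξ halg.symm ω h⟩
end

section
/- In the combinatorial reformulation of Lemma 3.4: for words ξ, η in the language of a λ-synchronizing subshift Λ, the follower sets satisfy Γ_*^+(ξ) = Γ_*^+(η) if and only if ι^{p-q}(V_{t(ξ)}^p) = V_{t(η)}^q, where p = |ξ| ≤ q = |η|, V_{t(ξ)}^p is the set of terminal vertices in V_p of paths labeled ξ in 𝔏^{λ(Λ)}, and ι^{p-q}(V_{t(ξ)}^p) = {v ∈ V_q : ι^{q-p}(v) ∈ V_{t(ξ)}^p}. -/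
open scoped Classical

section AuxLang

variable {A : Type*}

theorem aux_mem_of_append_left {Λ : ShiftLang A} {u v : List A} (h : u ++ v ∈ Λ.L) :
    u ∈ Λ.L := Λ.factor [] u v (by simpa using h)

theorem aux_mem_of_append_right {Λ : ShiftLang A} {u v : List A} (h : u ++ v ∈ Λ.L) :
    v ∈ Λ.L := Λ.factor u v [] (by simpa using h)

theorem aux_gamma_tail_subset (Λ : ShiftLang A) {m : ℕ} {μ μ' : List A}
    (h : Λ.Γminus (m+1) μ ⊆ Λ.Γminus (m+1) μ') :
    Λ.Γminus m μ ⊆ Λ.Γminus m μ' := by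
  rintro w ⟨⟨hwL, hwlen⟩, hwμ⟩
  obtain ⟨a, ha⟩ := Λ.ext_left _ hwμ
  have h1 := h ⟨⟨aux_mem_of_append_left (show (a :: w) ++ μ ∈ Λ.L by simpa using ha),
    by simp [hwlen]⟩, by simpa using ha⟩
  exact ⟨⟨hwL, hwlen⟩, Λ.factor [a] (w ++ μ') [] (by simpa using h1.2)⟩

theorem aux_gamma_tail_iter (Λ : ShiftLang A) (k : ℕ) {m : ℕ} {μ μ' : List A}
    (h : Λ.Γminus (m+k) μ = Λ.Γminus (m+k) μ') : Λ.Γminus m μ = Λ.Γminus m μ' := by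
  induction k with
  | zero => exact h
  | succ k ih =>
    exact ih (Set.Subset.antisymm (aux_gamma_tail_subset Λ (le_of_eq h))
      (aux_gamma_tail_subset Λ (le_of_eq h.symm)))

theorem aux_sync_mono_one (Λ : ShiftLang A) {l : ℕ} {μ : List A} (h : μ ∈ Λ.Sync (l+1)) :
    μ ∈ Λ.Sync l := by
  obtain ⟨hμ, hsync⟩ := h
  exact ⟨hμ, fun ω hω => aux_gamma_tail_iter Λ 1 (hsync ω hω)⟩

theorem aux_sync_mono (Λ : ShiftLang A) {k m : ℕ} (hmk : m ≤ k) {μ : List A}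
    (h : μ ∈ Λ.Sync k) : μ ∈ Λ.Sync m := by
  induction k with
  | zero => simpa [Nat.le_zero.mp hmk] using h
  | succ k ih =>
    rcases Nat.lt_or_ge m (k+1) with hlt | hge
    · exact ih (Nat.lt_succ_iff.mp hlt) (aux_sync_mono_one Λ h)
    · have : m = k + 1 := le_antisymm hmk hge
      simpa [this] using h

theorem aux_sync_prepend (Λ : ShiftLang A) {l : ℕ} {u ν : List A}
    (hν : ν ∈ Λ.Sync (l + u.length)) (hL : u ++ ν ∈ Λ.L) : (u ++ ν) ∈ Λ.Sync l := by
  refine ⟨hL, fun ρ hρ => ?_⟩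
  have hρL : (u ++ ν) ++ ρ ∈ Λ.L := hρ
  have hρ' : ρ ∈ Λ.Γplus ν := aux_mem_of_append_right
    (show u ++ (ν ++ ρ) ∈ Λ.L by simpa [List.append_assoc] using hρL)
  ext w
  constructor
  · rintro ⟨⟨hwL, hwlen⟩, hw⟩
    have h1 : (w ++ u) ∈ Λ.Γminus (l + u.length) ν :=
      ⟨⟨aux_mem_of_append_left (show (w ++ u) ++ ν ∈ Λ.L by simpa [List.append_assoc] using hw),
        by simp [hwlen]⟩, by simpa [List.append_assoc] using hw⟩
    rw [hν.2 ρ hρ'] at h1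
    exact ⟨⟨hwL, hwlen⟩, by simpa [List.append_assoc] using h1.2⟩
  · rintro ⟨⟨hwL, hwlen⟩, hw⟩
    exact ⟨⟨hwL, hwlen⟩, Λ.factor [] (w ++ (u ++ ν)) ρ (by simpa [List.append_assoc] using hw)⟩

end AuxLang

namespace LGS

variable {A : Type*} (G : LGS A)

theorem aux_edge_iota {l : ℕ} {v : G.V (l+1)} {a : A} {u : G.V (l+2)}
    (h : G.edge (l+1) v a u) : G.edge l (G.ι l v) a (G.ι (l+1) u) :=
  (G.local_prop l (G.ι l v) u a).1 ⟨v, h, rfl⟩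

theorem aux_path_iota : ∀ {w : List A} {l m : ℕ} {v : G.V (l+1)} {u : G.V (m+1)},
    G.Path v w u → G.Path (G.ι l v) w (G.ι m u) := by
  intro w
  induction w with
  | nil =>
    intro l m v u h
    cases h
    exact Path.nil _
  | cons a w ih =>
    intro l m v u h
    cases h with
    | cons e p => exact Path.cons (G.aux_edge_iota e) (ih p)

theorem aux_path_lift : ∀ (w : List A) {l m : ℕ} (u : G.V l) (t : G.V (m+1)),
    G.Path u w (G.ι m t) → ∃ u' : G.V (l+1), G.ι l u' = u ∧ G.Path u' w t := by
  intro w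
  induction w with
  | nil =>
    intro l m u t h
    cases h
    exact ⟨t, rfl, Path.nil t⟩
  | cons a w ih =>
    intro l m u t h
    cases h with
    | cons e p =>
      obtain ⟨u'', hu''ι, hu''p⟩ := ih _ t p
      have e' : G.edge _ u a (G.ι _ u'') := hu''ι ▸ e
      obtain ⟨w', hw'e, hw'ι⟩ := (G.local_prop _ u u'' a).2 e'
      exact ⟨w', hw'ι, Path.cons hw'e hu''p⟩

theorem aux_factB {l : ℕ} (v : G.V (l+1)) (w : List A) :
    (∃ v0 : G.V 0, G.Path v0 w (G.ι l v)) ↔ ∃ a : A, ∃ v0 : G.V 0, G.Path v0 (a :: w) v := by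
  constructor
  · rintro ⟨v0, hp⟩
    obtain ⟨u', hι, hp'⟩ := G.aux_path_lift w v0 v hp
    obtain ⟨a, v0', he⟩ := G.exists_pred 0 u'
    exact ⟨a, v0', Path.cons he hp'⟩
  · rintro ⟨a, v0, hp⟩
    cases hp with
    | cons e p => exact ⟨_, G.aux_path_iota p⟩

theorem aux_gammaV_iota (Λ : ShiftLang A) {m : ℕ} (v : G.V (m+1)) {μ : List A}
    (h : G.ΓminusV v = Λ.Γminus (m+1) μ) :
    G.ΓminusV (G.ι m v) = Λ.Γminus m μ := by
  ext w
  constructor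
  · rintro ⟨hwlen, hpath⟩
    obtain ⟨a, v0, hp⟩ := (G.aux_factB v w).1 hpath
    have h1 : (a :: w) ∈ G.ΓminusV v := ⟨by simp [hwlen], v0, hp⟩
    rw [h] at h1
    obtain ⟨⟨hL, _⟩, hμ⟩ := h1
    exact ⟨⟨Λ.factor [a] w μ (by simpa using hμ), hwlen⟩,
      Λ.factor [a] (w ++ μ) [] (by simpa using hμ)⟩
  · rintro ⟨⟨hwL, hwlen⟩, hwμ⟩
    obtain ⟨a, ha⟩ := Λ.ext_left _ hwμ
    have h1 : (a :: w) ∈ Λ.Γminus (m+1) μ :=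
      ⟨⟨aux_mem_of_append_left (show (a :: w) ++ μ ∈ Λ.L by simpa using ha),
        by simp [hwlen]⟩, by simpa using ha⟩
    rw [← h] at h1
    obtain ⟨_, v0, hp⟩ := h1
    exact ⟨hwlen, (G.aux_factB v w).2 ⟨a, v0, hp⟩⟩

theorem aux_gammaV_iotaPow (Λ : ShiftLang A) : ∀ (n : ℕ) {l : ℕ} (v : G.V (l + n)) {μ : List A},
    G.ΓminusV v = Λ.Γminus (l + n) μ → G.ΓminusV (G.iotaPow n v) = Λ.Γminus l μ := by
  intro n
  induction n with
  | zero => intro l v μ h; exact h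
  | succ n ih =>
    intro l v μ h
    exact ih (G.ι (l+n) v) (G.aux_gammaV_iota Λ v h)

end LGS

/-- combinatorial form of Lemma 3.4: for words `ξ, η` in the language of a
`λ`-synchronizing subshift `Λ` with `|η| = |ξ| + n`, the follower sets satisfy
`Γ_*^+(ξ) = Γ_*^+(η)` iff `ι^{p-q}(V_{t(ξ)}^p) = V_{t(η)}^q` in `𝔏^{λ(Λ)}`, i.e. a vertex
`v ∈ V_{|η|}` is a terminal vertex of a path labeled `η` from `V_0` iff `ι^n(v)` is a
terminal vertex of a path labeled `ξ` from `V_0`. -/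
theorem followerSet_eq_iff_terminalVertices
    {A : Type*} (G : LGS A) (Λ : ShiftLang A)
    (hirr : Λ.Irreducible) (hls : Λ.IsLambdaSync) (hsys : G.IsLambdaSyncSystem Λ)
    (ξ η : List A) (hξ : ξ ∈ Λ.L) (hη : η ∈ Λ.L)
    (n : ℕ) (hn : η.length = ξ.length + n) :
    Λ.Γplus ξ = Λ.Γplus η ↔
      ∀ v : G.V (ξ.length + n),
        ((∃ v0 : G.V 0, G.Path v0 η v) ↔ ∃ v0 : G.V 0, G.Path v0 ξ (G.iotaPow n v)) := by
  obtain ⟨hvert, hword, _⟩ := hsys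
  -- translation of both sides for a vertex with known predecessor set
  have trans1 : ∀ (v : G.V (ξ.length + n)) (μ : List A),
      G.ΓminusV v = Λ.Γminus (ξ.length + n) μ →
      (((∃ v0 : G.V 0, G.Path v0 η v) ↔ η ++ μ ∈ Λ.L) ∧
       ((∃ v0 : G.V 0, G.Path v0 ξ (G.iotaPow n v)) ↔ ξ ++ μ ∈ Λ.L)) := by
    intro v μ hΓ
    have hΓ' : G.ΓminusV (G.iotaPow n v) = Λ.Γminus ξ.length μ := G.aux_gammaV_iotaPow Λ n v hΓ
    refine ⟨⟨?_, ?_⟩, ?_, ?_⟩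
    · rintro ⟨v0, hp⟩
      have h1 : η ∈ G.ΓminusV v := ⟨hn, v0, hp⟩
      rw [hΓ] at h1; exact h1.2
    · intro hL
      have h1 : η ∈ Λ.Γminus (ξ.length + n) μ := ⟨⟨hη, hn⟩, hL⟩
      rw [← hΓ] at h1; exact h1.2
    · rintro ⟨v0, hp⟩
      have h1 : ξ ∈ G.ΓminusV (G.iotaPow n v) := ⟨rfl, v0, hp⟩
      rw [hΓ'] at h1; exact h1.2
    · intro hL
      have h1 : ξ ∈ Λ.Γminus ξ.length μ := ⟨⟨hξ, rfl⟩, hL⟩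
      rw [← hΓ'] at h1; exact h1.2
  constructor
  · intro hplus v
    obtain ⟨μ, _, hΓ⟩ := hvert _ v
    obtain ⟨h1, h2⟩ := trans1 v μ hΓ
    rw [h1, h2]
    constructor
    · intro h
      have hm : μ ∈ Λ.Γplus η := h
      rw [← hplus] at hm; exact hm
    · intro h
      have hm : μ ∈ Λ.Γplus ξ := h
      rw [hplus] at hm; exact hm
  · intro hRHS
    have transfer : ∀ μ ∈ Λ.Sync (ξ.length + n), (ξ ++ μ ∈ Λ.L ↔ η ++ μ ∈ Λ.L) := by
      intro μ hμ
      obtain ⟨v, hv⟩ := hword _ μ hμ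
      obtain ⟨μ', _, hΓ'⟩ := hvert _ v
      obtain ⟨h1, h2⟩ := trans1 v μ' hΓ'
      have hΓeq : Λ.Γminus (ξ.length + n) μ' = Λ.Γminus (ξ.length + n) μ := by
        rw [← hΓ', hv]
      have hΓp : Λ.Γminus ξ.length μ' = Λ.Γminus ξ.length μ := aux_gamma_tail_iter Λ n hΓeq
      constructor
      · intro hξμ
        have hmem : ξ ∈ Λ.Γminus ξ.length μ := ⟨⟨hξ, rfl⟩, hξμ⟩
        rw [← hΓp] at hmem
        have hημ' : η ++ μ' ∈ Λ.L := h1.1 ((hRHS v).2 (h2.2 hmem.2))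
        have hmem2 : η ∈ Λ.Γminus (ξ.length + n) μ' := ⟨⟨hη, hn⟩, hημ'⟩
        rw [hΓeq] at hmem2
        exact hmem2.2
      · intro hημ
        have hmem : η ∈ Λ.Γminus (ξ.length + n) μ := ⟨⟨hη, hn⟩, hημ⟩
        rw [← hΓeq] at hmem
        have hξμ' : ξ ++ μ' ∈ Λ.L := h2.1 ((hRHS v).1 (h1.2 hmem.2))
        have hmem2 : ξ ∈ Λ.Γminus ξ.length μ' := ⟨⟨hξ, rfl⟩, hξμ'⟩
        rw [hΓp] at hmem2
        exact hmem2.2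
    ext ω
    simp only [ShiftLang.Γplus, Set.mem_setOf_eq]
    constructor
    · intro hξω
      obtain ⟨ν, hν, hsync⟩ := hls (ξ.length + ω.length) (ξ ++ ω) ⟨hξω, by simp⟩
        ((ξ.length + ω.length) + (ξ.length + n)) (Nat.le_add_right _ _)
      rw [Nat.add_sub_cancel_left] at hsync
      have hξων : (ξ ++ ω) ++ ν ∈ Λ.L := hsync.1
      have hων : ω ++ ν ∈ Λ.L :=
        aux_mem_of_append_right (show ξ ++ (ω ++ ν) ∈ Λ.L by
          simpa [List.append_assoc] using hξων)
      have hν' : ν ∈ Λ.Sync ((ξ.length + n) + ω.length) := aux_sync_mono Λ (by omega) hν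
      have hμsync : ω ++ ν ∈ Λ.Sync (ξ.length + n) := aux_sync_prepend Λ hν' hων
      have hξμ : ξ ++ (ω ++ ν) ∈ Λ.L := by simpa [List.append_assoc] using hξων
      have hημ : η ++ (ω ++ ν) ∈ Λ.L := (transfer (ω ++ ν) hμsync).1 hξμ
      exact aux_mem_of_append_left (show (η ++ ω) ++ ν ∈ Λ.L by
        simpa [List.append_assoc] using hημ)
    · intro hηω
      obtain ⟨ν, hν, hsync⟩ := hls (η.length + ω.length) (η ++ ω) ⟨hηω, by simp⟩
        ((η.length + ω.length) + (ξ.length + n)) (Nat.le_add_right _ _)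
      rw [Nat.add_sub_cancel_left] at hsync
      have hηων : (η ++ ω) ++ ν ∈ Λ.L := hsync.1
      have hων : ω ++ ν ∈ Λ.L :=
        aux_mem_of_append_right (show η ++ (ω ++ ν) ∈ Λ.L by
          simpa [List.append_assoc] using hηων)
      have hν' : ν ∈ Λ.Sync ((ξ.length + n) + ω.length) := aux_sync_mono Λ (by omega) hν
      have hμsync : ω ++ ν ∈ Λ.Sync (ξ.length + n) := aux_sync_prepend Λ hν' hων
      have hημ : η ++ (ω ++ ν) ∈ Λ.L := by simpa [List.append_assoc] using hηων
      have hξμ : ξ ++ (ω ++ ν) ∈ Λ.L := (transfer (ω ++ ν) hμsync).2 hημ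
      exact aux_mem_of_append_left (show (ξ ++ ω) ++ ν ∈ Λ.L by
        simpa [List.append_assoc] using hξμ)
end

section
/- Let Λ be a λ-synchronizing subshift homeomorphic to a Cantor set. If Λ is synchronizingly transitive (for all words μ, ν both μ ≻ ν and ν ≻ μ hold, where μ ≻ ν means there is a word η with Γ_*^+(ν) = Γ_*^+(μην)), then the λ-synchronizing λ-graph system 𝔏^{λ(Λ)} is λ-irreducible. -/
open scoped Classical

section Aux

variable {A : Type*} (Λ : ShiftLang A) (G : LGS A)

lemma aux_mem_L_left {u v : List A} (h : u ++ v ∈ Λ.L) : v ∈ Λ.L :=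
  Λ.factor u v [] (by simpa using h)

lemma aux_mem_L_right {u v : List A} (h : u ++ v ∈ Λ.L) : u ∈ Λ.L :=
  Λ.factor [] u v (by simpa using h)

lemma aux_left_ext_n (n : ℕ) (μ : List A) (h : μ ∈ Λ.L) :
    ∃ σ : List A, σ.length = n ∧ σ ++ μ ∈ Λ.L := by
  induction n with
  | zero => exact ⟨[], rfl, by simpa using h⟩
  | succ n IH =>
    obtain ⟨σ, hlen, hm⟩ := IH
    obtain ⟨a, ha⟩ := Λ.ext_left (σ ++ μ) hm
    exact ⟨a :: σ, by simp [hlen], by simpa using ha⟩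

lemma aux_gm_tail (l : ℕ) (ν : List A) :
    Λ.Γminus l ν = {ρ | ∃ a : A, a :: ρ ∈ Λ.Γminus (l + 1) ν} := by
  ext ρ
  constructor
  · rintro ⟨⟨hρL, hlen⟩, hρν⟩
    obtain ⟨a, ha⟩ := Λ.ext_left (ρ ++ ν) hρν
    exact ⟨a, ⟨Λ.factor [] (a :: ρ) ν (by simpa using ha), by simp [hlen]⟩,
      by simpa using ha⟩
  · rintro ⟨a, ⟨haL, hlen⟩, haν⟩
    exact ⟨⟨Λ.factor [a] ρ ν (by simpa using haν), by simpa using hlen⟩,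
      Λ.factor [a] (ρ ++ ν) [] (by simpa using haν)⟩

lemma aux_gm_tails (n l : ℕ) (ν : List A) :
    Λ.Γminus l ν = {ρ | ∃ σ : List A, σ.length = n ∧ σ ++ ρ ∈ Λ.Γminus (l + n) ν} := by
  induction n with
  | zero =>
    ext ρ
    simp [List.length_eq_zero_iff]
  | succ n IH =>
    rw [IH, aux_gm_tail Λ (l + n) ν]
    ext ρ
    simp only [Set.mem_setOf_eq]
    constructor
    · rintro ⟨σ, rfl, a, h⟩
      exact ⟨a :: σ, by simp, h⟩
    · rintro ⟨σ, hlen, h⟩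
      cases σ with
      | nil => simp at hlen
      | cons a σ' => exact ⟨σ', by simpa using hlen, a, h⟩

lemma aux_path_nil_inv {l m : ℕ} {u : G.V l} {x : G.V m} (h : G.Path u [] x) :
    l = m ∧ HEq u x := by
  cases h
  exact ⟨rfl, HEq.rfl⟩

lemma aux_path_cons_inv {l m : ℕ} {u : G.V l} {x : G.V m} {a : A} {ρ : List A}
    (h : G.Path u (a :: ρ) x) :
    ∃ w : G.V (l + 1), G.edge l u a w ∧ G.Path w ρ x := by
  cases h with
  | cons e p => exact ⟨_, e, p⟩

lemma aux_path_push (ρ : List A) :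
    ∀ {l m : ℕ} (u : G.V (l + 1)) (x : G.V (m + 1)),
      G.Path u ρ x → G.Path (G.ι l u) ρ (G.ι m x) := by
  induction ρ with
  | nil =>
    intro l m u x h
    obtain ⟨hlm, hux⟩ := aux_path_nil_inv G h
    have hlm' : l = m := by omega
    subst hlm'
    have : u = x := eq_of_heq hux
    subst this
    exact LGS.Path.nil _
  | cons a ρ IH =>
    intro l m u x h
    obtain ⟨w, e, p⟩ := aux_path_cons_inv G h
    have e' : G.edge l (G.ι l u) a (G.ι (l + 1) w) :=
      (G.local_prop l (G.ι l u) w a).mp ⟨u, e, rfl⟩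
    exact LGS.Path.cons e' (IH w x p)

lemma aux_path_lift (ρ : List A) :
    ∀ {l m : ℕ} (u : G.V l) (q : G.V m), G.Path u ρ q →
      ∀ (q' : G.V (m + 1)), G.ι m q' = q →
        ∃ u' : G.V (l + 1), G.ι l u' = u ∧ G.Path u' ρ q' := by
  induction ρ with
  | nil =>
    intro l m u q h q' hq
    obtain ⟨hlm, huq⟩ := aux_path_nil_inv G h
    subst hlm
    have : u = q := eq_of_heq huq
    subst this
    exact ⟨q', hq, LGS.Path.nil _⟩
  | cons a ρ IH =>
    intro l m u q h q' hq
    obtain ⟨t, e, p⟩ := aux_path_cons_inv G h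
    obtain ⟨t', ht', p'⟩ := IH t q p q' hq
    have e0 : G.edge l u a (G.ι (l + 1) t') := by rw [ht']; exact e
    obtain ⟨u', e', hu'⟩ := (G.local_prop l u t' a).mpr e0
    exact ⟨u', hu', LGS.Path.cons e' p'⟩

lemma aux_gv_iota (l : ℕ) (w : G.V (l + 1)) :
    G.ΓminusV (G.ι l w) = {ρ | ∃ a : A, a :: ρ ∈ G.ΓminusV w} := by
  ext ρ
  constructor
  · rintro ⟨hlen, v0, p⟩
    obtain ⟨v0', _, p'⟩ := aux_path_lift G ρ v0 (G.ι l w) p w rfl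
    obtain ⟨a, vm, e⟩ := G.exists_pred 0 v0'
    exact ⟨a, by simpa using hlen, vm, LGS.Path.cons e p'⟩
  · rintro ⟨a, hlen, v0, p⟩
    obtain ⟨v1, e, p'⟩ := aux_path_cons_inv G p
    exact ⟨by simpa using hlen, G.ι 0 v1, aux_path_push G ρ v1 w p'⟩

lemma aux_gv_iotaPow (n : ℕ) :
    ∀ {l : ℕ} (w : G.V (l + n)),
      G.ΓminusV (G.iotaPow n w) = {ρ | ∃ σ : List A, σ.length = n ∧ σ ++ ρ ∈ G.ΓminusV w} := by
  induction n with
  | zero =>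
    intro l w
    ext ρ
    simp [LGS.iotaPow, List.length_eq_zero_iff]
  | succ n IH =>
    intro l w
    have : G.iotaPow (n + 1) w = G.iotaPow n (G.ι (l + n) w) := rfl
    rw [this, IH (G.ι (l + n) w), aux_gv_iota G (l + n) w]
    ext ρ
    simp only [Set.mem_setOf_eq]
    constructor
    · rintro ⟨σ, rfl, a, h⟩
      exact ⟨a :: σ, by simp, h⟩
    · rintro ⟨σ, hlen, h⟩
      cases σ with
      | nil => simp at hlen
      | cons a σ' => exact ⟨σ', by simpa using hlen, a, h⟩

lemma aux_sync_cons {k : ℕ} {a : A} {μ : List A} (hμ : μ ∈ Λ.Sync (k + 1))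
    (h : a :: μ ∈ Λ.L) : a :: μ ∈ Λ.Sync k := by
  have key : ∀ τ : List A, Λ.Γminus k (a :: τ) =
      {ρ | ρ ∈ Λ.B k ∧ ρ ++ [a] ∈ Λ.Γminus (k + 1) τ} := by
    intro τ
    ext ρ
    constructor
    · rintro ⟨hB, hρ⟩
      refine ⟨hB, ⟨Λ.factor [] (ρ ++ [a]) τ (by simpa using hρ), by simp [hB.2]⟩,
        by simpa using hρ⟩
    · rintro ⟨hB, _, hρ⟩
      exact ⟨hB, by simpa using hρ⟩
  refine ⟨h, ?_⟩
  intro ω hω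
  have hω' : ω ∈ Λ.Γplus μ := by
    have : (a :: μ) ++ ω ∈ Λ.L := hω
    exact Λ.factor [a] (μ ++ ω) [] (by simpa using this)
  have hsync := hμ.2 ω hω'
  rw [show (a :: μ) ++ ω = a :: (μ ++ ω) from rfl, key μ, key (μ ++ ω), hsync]

lemma aux_sync_append {k : ℕ} (σ : List A) {ν : List A}
    (hν : ν ∈ Λ.Sync (k + σ.length)) (h : σ ++ ν ∈ Λ.L) : σ ++ ν ∈ Λ.Sync k := by
  induction σ generalizing k with
  | nil => simpa using hν
  | cons a σ' IH =>
    have hν' : ν ∈ Λ.Sync ((k + 1) + σ'.length) := by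
      rwa [show (k + 1) + σ'.length = k + (a :: σ').length by simp; omega]
    have h' : σ' ++ ν ∈ Λ.L := Λ.factor [a] (σ' ++ ν) [] (by simpa using h)
    have := aux_sync_cons Λ (IH hν' h') (by simpa using h)
    simpa using this

lemma aux_build (hsys : G.IsLambdaSyncSystem Λ) (γ : List A) :
    ∀ (l m : ℕ), l + γ.length = m → ∀ (ν : List A), ν ∈ Λ.Sync m → γ ++ ν ∈ Λ.L →
      ∀ w : G.V m, G.ΓminusV w = Λ.Γminus m ν →
        ∃ v' : G.V l, G.ΓminusV v' = Λ.Γminus l (γ ++ ν) ∧ G.Path v' γ w := by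
  induction γ with
  | nil =>
    intro l m h ν hν hγν w hw
    have hlm : l = m := by simpa using h
    subst hlm
    exact ⟨w, by simpa using hw, LGS.Path.nil w⟩
  | cons a γ' IH =>
    intro l m h ν hν hγν w hw
    have h' : (l + 1) + γ'.length = m := by simp at h; omega
    have hγ'ν : γ' ++ ν ∈ Λ.L := Λ.factor [a] (γ' ++ ν) [] (by simpa using hγν)
    obtain ⟨v₁, hΓ1, p1⟩ := IH (l + 1) m h' ν hν hγ'ν w hw
    have hs1 : γ' ++ ν ∈ Λ.Sync (l + 1) :=
      aux_sync_append Λ γ' (by rwa [show (l + 1) + γ'.length = m from h'] ) hγ'ν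
    have hs0 : (a :: γ') ++ ν ∈ Λ.Sync l := by
      refine aux_sync_append Λ (a :: γ') ?_ hγν
      rwa [show l + (a :: γ').length = m by simpa using h]
    obtain ⟨v', hv'⟩ := hsys.2.1 l ((a :: γ') ++ ν) hs0
    have e : G.edge l v' a v₁ :=
      (hsys.2.2 l v' a v₁).mpr ⟨γ' ++ ν, hs1, (show a :: (γ' ++ ν) ∈ Λ.L from hγν),
        hΓ1, hv'⟩
    exact ⟨v', hv', LGS.Path.cons e p1⟩

lemma aux_path_swap (hsys : G.IsLambdaSyncSystem Λ) {l m : ℕ} {v v' : G.V l} {x : G.V m}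
    (hvv : G.ΓminusV v = G.ΓminusV v') {γ : List A} (hne : γ ≠ [])
    (h : G.Path v' γ x) : G.Path v γ x := by
  cases γ with
  | nil => exact absurd rfl hne
  | cons a ρ => ?_
  obtain ⟨t, e, p⟩ := aux_path_cons_inv G h
  obtain ⟨ν, h1, h2, h3, h4⟩ := (hsys.2.2 l v' a t).mp e
  exact LGS.Path.cons ((hsys.2.2 l v a t).mpr ⟨ν, h1, h2, h3, by rw [hvv]; exact h4⟩) p

end Aux

/-- if a `λ`-synchronizing subshift `Λ` homeomorphic to a Cantor set is
synchronizingly transitive, then its `λ`-synchronizing `λ`-graph system `𝔏^{λ(Λ)}` is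
`λ`-irreducible. -/
theorem lambdaIrreducible_of_syncTransitive
    {A : Type*} [TopologicalSpace A] [DiscreteTopology A]
    (G : LGS A) (Λ : ShiftLang A)
    (hirr : Λ.Irreducible) (hls : Λ.IsLambdaSync) (hsys : G.IsLambdaSyncSystem Λ)
    (hCantor : Nonempty
      (({x : ℤ → A | ∀ (i : ℤ) (n : ℕ), (List.ofFn fun k : Fin n => x (i + (k : ℤ))) ∈ Λ.L}
        : Set (ℤ → A)) ≃ₜ (ℕ → Bool)))
    (htrans : Λ.SyncTransitive) :
    G.LambdaIrreducible := by
  intro l u v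
  obtain ⟨μu, hμu, hu⟩ := hsys.1 l u
  obtain ⟨μv, hμv, hv⟩ := hsys.1 l v
  obtain ⟨ρ, hρlen, hρapp⟩ := aux_left_ext_n Λ l μu hμu.1
  have hρL : ρ ∈ Λ.L := aux_mem_L_right Λ hρapp
  have hρu : ρ ∈ G.ΓminusV u := by rw [hu]; exact ⟨⟨hρL, hρlen⟩, hρapp⟩
  obtain ⟨a, ha⟩ := Λ.ext_right μv hμv.1
  obtain ⟨η, hη⟩ := (htrans (μv ++ [a]) ha ρ hρL).1
  refine ⟨((μv ++ [a]) ++ η ++ ρ).length, ?_⟩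
  intro w hw
  obtain ⟨ν, hνs, hwΓ⟩ := hsys.1 _ w
  have h1 : Λ.Γminus l ν = G.ΓminusV u := by
    rw [aux_gm_tails Λ (((μv ++ [a]) ++ η ++ ρ).length) l ν, ← hwΓ, ← aux_gv_iotaPow, hw]
  have hρν : ρ ∈ Λ.Γminus l ν := by rw [h1]; exact hρu
  have hγν : ((μv ++ [a]) ++ η ++ ρ) ++ ν ∈ Λ.L := by
    have hmem : ν ∈ Λ.Γplus ρ := hρν.2
    rw [hη] at hmem
    exact hmem
  obtain ⟨v', hv', pγ⟩ :=
    aux_build Λ G hsys ((μv ++ [a]) ++ η ++ ρ) l _ rfl ν hνs hγν w hwΓ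
  have hΓeq : Λ.Γminus l (((μv ++ [a]) ++ η ++ ρ) ++ ν) = Λ.Γminus l μv := by
    have hfol : ([a] ++ η ++ ρ ++ ν) ∈ Λ.Γplus μv := by
      show μv ++ ([a] ++ η ++ ρ ++ ν) ∈ Λ.L
      simpa [List.append_assoc] using hγν
    have h2 := hμv.2 ([a] ++ η ++ ρ ++ ν) hfol
    rw [show ((μv ++ [a]) ++ η ++ ρ) ++ ν = μv ++ ([a] ++ η ++ ρ ++ ν) by
      simp [List.append_assoc]]
    exact h2.symm
  have hvv' : G.ΓminusV v = G.ΓminusV v' := by rw [hv, hv', hΓeq]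
  have hne : ((μv ++ [a]) ++ η ++ ρ) ≠ [] := by simp
  exact ⟨_, aux_path_swap Λ G hsys hvv' hne pγ⟩
end

section
/- For partial isometries s_μ, s_α, s_β satisfying Ps_α = s_α, s_α*P = s_α* and P s_β* s_β = s_β* s_β (P a projection), the following identities hold: s_μ*(P − s_α* s_α)s_μ · s_μ* s_β* s_β s_μ = (P − s_{αμ}* s_{αμ}) s_{βμ}* s_{βμ}, and s_α* · s_μ* s_μ (P − s_ν* s_ν) s_α = s_{μα}* s_{μα}(P − s_{να}* s_{να}). -/
lemma aux1_pi {R : Type*} [Ring R] [StarRing R] (s t : R)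
    (h : s * star s * s = s) (hc : s * star s * (t) = t * (s * star s)) :
    star s * s * (star s * t * s) = star s * t * s := by
  calc star s * s * (star s * t * s)
      = star s * (s * star s * t * s) := by simp only [mul_assoc]
    _ = star s * (t * (s * star s) * s) := by rw [hc]
    _ = star s * (t * (s * star s * s)) := by simp only [mul_assoc]
    _ = star s * t * s := by rw [h, mul_assoc]

lemma aux2_pi {R : Type*} [Ring R] [StarRing R] (s m n : R)
    (h : s * star s * s = s) (hc : s * star s * n = n * (s * star s)) :
    (star s * m * s) * (star s * n * s) = star s * (m * n) * s := by
  calc (star s * m * s) * (star s * n * s)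
      = star s * m * (s * star s * n * s) := by simp only [mul_assoc]
    _ = star s * m * (n * (s * star s) * s) := by rw [hc]
    _ = star s * m * (n * (s * star s * s)) := by simp only [mul_assoc]
    _ = star s * (m * n) * s := by rw [h]; simp only [mul_assoc]

/-- Lemma 4.5: for partial isometries `sμ, sα, sβ, sν` and a projection `P`
with `P s_x = s_x`, `s_x* P = s_x*`, `P s_x* s_x = s_x* s_x` (source projections below `P`)
and commuting range/source projections, the identities
`s_μ*(P − s_α* s_α)s_μ · s_μ* s_β* s_β s_μ = (P − s_{αμ}* s_{αμ}) s_{βμ}* s_{βμ}` and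
`s_α* · s_μ* s_μ (P − s_ν* s_ν) s_α = s_{μα}* s_{μα}(P − s_{να}* s_{να})` hold. -/
theorem partialIsometry_identities {R : Type*} [Ring R] [StarRing R]
    (P sμ sα sβ sν : R)
    (hPproj : P * P = P) (hPsa : star P = P)
    (hpi : ∀ x ∈ ({sμ, sα, sβ, sν} : Set R), x * star x * x = x)
    (hPleft : ∀ x ∈ ({sμ, sα, sβ, sν} : Set R), P * x = x)
    (hleftP : ∀ x ∈ ({sμ, sα, sβ, sν} : Set R), star x * P = star x)
    (hsrc : ∀ x ∈ ({sμ, sα, sβ, sν} : Set R), P * (star x * x) = star x * x)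
    (hcomm : ∀ x ∈ ({sμ, sα, sβ, sν} : Set R), ∀ y ∈ ({sμ, sα, sβ, sν} : Set R),
      Commute (x * star x) (star y * y) ∧ Commute (star x * x) (star y * y) ∧
      Commute (x * star x) (y * star y)) :
    (star sμ * (P - star sα * sα) * sμ) * (star sμ * (star sβ * sβ) * sμ)
        = (P - star (sα * sμ) * (sα * sμ)) * (star (sβ * sμ) * (sβ * sμ)) ∧
    star sα * (star sμ * sμ * (P - star sν * sν)) * sα
        = star (sμ * sα) * (sμ * sα) * (P - star (sν * sα) * (sν * sα)) := by
  have mμ : sμ ∈ ({sμ, sα, sβ, sν} : Set R) := by simp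
  have mα : sα ∈ ({sμ, sα, sβ, sν} : Set R) := by simp
  have mβ : sβ ∈ ({sμ, sα, sβ, sν} : Set R) := by simp
  have mν : sν ∈ ({sμ, sα, sβ, sν} : Set R) := by simp
  have hμ := hpi sμ mμ
  have hα := hpi sα mα
  have hPμ := hleftP sμ mμ
  have hsrcμ := hsrc sμ mμ
  have hsrcα := hsrc sα mα
  obtain ⟨cμβ, -, -⟩ := hcomm sμ mμ sβ mβ
  obtain ⟨cαν, -, -⟩ := hcomm sα mα sν mν
  have hssPμ : star sμ * sμ * P = star sμ * sμ := by
    have h := congrArg star hsrcμ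
    simp only [star_mul, star_star, hPsa] at h
    exact h
  have hssPα : star sα * sα * P = star sα * sα := by
    have h := congrArg star hsrcα
    simp only [star_mul, star_star, hPsa] at h
    exact h
  have hα2 : sα * (star sα * sα) = sα := by rw [← mul_assoc]; exact hα
  have hμ2 : sμ * (star sμ * sμ) = sμ := by rw [← mul_assoc]; exact hμ
  have hαP : sα * P = sα := by
    calc sα * P = sα * (star sα * sα) * P := by rw [hα2]
      _ = sα * (star sα * sα * P) := by rw [mul_assoc]
      _ = sα * (star sα * sα) := by rw [hssPα]
      _ = sα := hα2
  have hμP : sμ * P = sμ := by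
    calc sμ * P = sμ * (star sμ * sμ) * P := by rw [hμ2]
      _ = sμ * (star sμ * sμ * P) := by rw [mul_assoc]
      _ = sμ * (star sμ * sμ) := by rw [hssPμ]
      _ = sμ := hμ2
  have hPstarμ : P * star sμ = star sμ := by
    have := congrArg star hμP
    simpa [star_mul, hPsa] using this
  constructor
  · have hX : star (sβ * sμ) * (sβ * sμ) = star sμ * (star sβ * sβ) * sμ := by
      simp only [star_mul, mul_assoc]
    have hA : star (sα * sμ) * (sα * sμ) = star sμ * (star sα * sα) * sμ := by
      simp only [star_mul, mul_assoc]
    rw [hX, hA]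
    have hL : star sμ * (P - star sα * sα) * sμ
        = star sμ * sμ - star sμ * (star sα * sα) * sμ := by
      simp only [mul_sub, sub_mul]
      rw [hPμ]
    rw [hL, sub_mul, sub_mul]
    congr 1
    rw [aux1_pi sμ (star sβ * sβ) hμ cμβ.eq]
    conv_rhs => rw [← mul_assoc, ← mul_assoc, hPstarμ]
  · have hM : star (sμ * sα) * (sμ * sα) = star sα * (star sμ * sμ) * sα := by
      simp only [star_mul, mul_assoc]
    have hN : star (sν * sα) * (sν * sα) = star sα * (star sν * sν) * sα := by
      simp only [star_mul, mul_assoc]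
    rw [hM, hN]
    simp only [mul_sub, sub_mul]
    rw [hssPμ]
    congr 1
    · conv_rhs => rw [mul_assoc, hαP]
    · exact (aux2_pi sα (star sμ * sμ) (star sν * sν) hα cαν.eq).symm
end
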